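/- (Riedtmann–Peng formula.) Let k be a finite field, A a finite-dimensional k-algebra, and M, N, G finite-dimensional A-modules. Let W(M,N;G) be the set of pairs (f, p) with f : N → G injective A-linear, p : G → M surjective A-linear, and image of f equal to kernel of p; the group Aut_A(G) acts on W(M,N;G) by h·(f, p) = (h∘f, p∘h⁻¹). Then |Aut_A(G)| · (number of Aut_A(G)-orbits on W(M,N;G)) = g^{G}_{M,N} · |Aut_A(M)| · |Aut_A(N)| · |Hom_A(M, N)|; equivalently, g^{G}_{M,N} = |Aut_A(G)| · |Ext_A(M,N)_{G}| / (|Aut_A(M)| · |Aut_A(N)| · |Hom_A(M,N)|), where |Ext_A(M,N)_{G}| is the number of equivalence classes of short exact sequences 0 → N → G → M → 0 (two such sequences being equivalent iff they differ by an automorphism of G compatible with the identity maps on M and N). -/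

import Mathlib

open MulAction

section Aux

variable (R M N G : Type*) [Ring R]
  [AddCommGroup M] [Module R M]
  [AddCommGroup N] [Module R N]
  [AddCommGroup G] [Module R G]

abbrev RPW := {fp : (N →ₗ[R] G) × (G →ₗ[R] M) //
    Function.Injective fp.1 ∧ Function.Surjective fp.2 ∧
      LinearMap.range fp.1 = LinearMap.ker fp.2}

variable {R M N G}

namespace RPW

instance : SMul (G ≃ₗ[R] G) (RPW R M N G) where
  smul h w := ⟨(h.toLinearMap ∘ₗ w.1.1, w.1.2 ∘ₗ h.symm.toLinearMap),
    h.injective.comp w.2.1,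
    w.2.2.1.comp h.symm.surjective,
    by
      rw [LinearMap.range_comp, LinearMap.ker_comp, w.2.2.2]
      exact Submodule.map_equiv_eq_comap_symm h _⟩

lemma smul_def (h : G ≃ₗ[R] G) (w : RPW R M N G) :
    (h • w).1 = (h.toLinearMap ∘ₗ w.1.1, w.1.2 ∘ₗ h.symm.toLinearMap) := rfl

instance : MulAction (G ≃ₗ[R] G) (RPW R M N G) where
  one_smul w := Subtype.ext (Prod.ext (by ext n; rfl) (by ext x; rfl))
  mul_smul h₁ h₂ w := Subtype.ext (Prod.ext (by ext n; rfl) (by ext x; rfl))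

lemma smul_eq_iff (h : G ≃ₗ[R] G) (w w' : RPW R M N G) :
    h • w = w' ↔
      (h.toLinearMap ∘ₗ w.1.1 = w'.1.1) ∧ (w.1.2 ∘ₗ h.symm.toLinearMap = w'.1.2) := by
  rw [Subtype.ext_iff, Prod.ext_iff]
  rfl

lemma pf_zero (w : RPW R M N G) (n : N) : w.1.2 (w.1.1 n) = 0 := by
  have : w.1.1 n ∈ LinearMap.range w.1.1 := ⟨n, rfl⟩
  rw [w.2.2.2] at this
  exact this

/-- the unipotent automorphism `1 + f ∘ s ∘ p` of `G`. -/
noncomputable def toAut (w : RPW R M N G) (s : M →ₗ[R] N) : G ≃ₗ[R] G :=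
  LinearEquiv.ofLinear (LinearMap.id + w.1.1 ∘ₗ s ∘ₗ w.1.2)
    (LinearMap.id - w.1.1 ∘ₗ s ∘ₗ w.1.2)
    (by ext x; simp [pf_zero w])
    (by ext x; simp [pf_zero w])

lemma toAut_apply (w : RPW R M N G) (s : M →ₗ[R] N) (x : G) :
    toAut w s x = x + w.1.1 (s (w.1.2 x)) := rfl

lemma toAut_symm_apply (w : RPW R M N G) (s : M →ₗ[R] N) (x : G) :
    (toAut w s).symm x = x - w.1.1 (s (w.1.2 x)) := rfl

lemma toAut_mem_stabilizer (w : RPW R M N G) (s : M →ₗ[R] N) :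
    toAut w s ∈ stabilizer (G ≃ₗ[R] G) w := by
  rw [mem_stabilizer_iff, smul_eq_iff]
  constructor
  · ext n
    simp [toAut_apply, pf_zero w]
  · ext x
    simp [toAut_symm_apply, pf_zero w]

lemma card_stabilizer (w : RPW R M N G) :
    Nat.card (stabilizer (G ≃ₗ[R] G) w) = Nat.card (M →ₗ[R] N) := by
  obtain ⟨⟨f, p⟩, hinj, hsurj, hexact⟩ := w
  set w : RPW R M N G := ⟨(f, p), hinj, hsurj, hexact⟩ with hw
  refine (Nat.card_congr (Equiv.ofBijective
    (fun s : M →ₗ[R] N => (⟨toAut w s, toAut_mem_stabilizer w s⟩ :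
      stabilizer (G ≃ₗ[R] G) w)) ⟨?_, ?_⟩)).symm
  · intro s s' hss
    have h1 : ∀ x : G, x + f (s (p x)) = x + f (s' (p x)) := fun x =>
      congrArg (fun (e : G ≃ₗ[R] G) => e x) (Subtype.ext_iff.1 hss)
    ext m
    obtain ⟨x, rfl⟩ := hsurj m
    have := h1 x
    exact hinj (add_left_cancel this)
  · rintro ⟨h, hh⟩
    rw [mem_stabilizer_iff, smul_eq_iff] at hh
    obtain ⟨hcf, hcp⟩ := hh
    have hf' : ∀ n, h (f n) = f n := fun n => DFunLike.congr_fun hcf n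
    have hp' : ∀ x, p (h x) = p x := by
      intro x
      have := DFunLike.congr_fun hcp (h x)
      simpa using this.symm
    set u : G →ₗ[R] G := h.toLinearMap - LinearMap.id with hu
    have hmem : ∀ x, u x ∈ LinearMap.range f := by
      intro x
      rw [hexact]
      simp [hu, LinearMap.mem_ker, hp' x]
    set u' : G →ₗ[R] (LinearMap.range f) :=
      LinearMap.codRestrict (LinearMap.range f) u hmem with hu'
    have hle : LinearMap.ker p ≤ LinearMap.ker u' := by
      intro x hx
      rw [← hexact] at hx
      obtain ⟨n, rfl⟩ := hx
      rw [LinearMap.mem_ker]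
      apply Subtype.ext
      simp [hu', hu, hf' n]
    set s : M →ₗ[R] N :=
      ((LinearEquiv.ofInjective f hinj).symm.toLinearMap ∘ₗ
        ((LinearMap.ker p).liftQ u' hle)) ∘ₗ
        (p.quotKerEquivOfSurjective hsurj).symm.toLinearMap with hs
    refine ⟨s, ?_⟩
    apply Subtype.ext
    apply LinearEquiv.toLinearMap_injective
    ext x
    have e2mk : ∀ y : G, (p.quotKerEquivOfSurjective hsurj) (Submodule.Quotient.mk y) = p y :=
      fun y => rfl
    have e2s : (p.quotKerEquivOfSurjective hsurj).symm (p x) = Submodule.Quotient.mk x := by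
      apply (p.quotKerEquivOfSurjective hsurj).injective
      rw [LinearEquiv.apply_symm_apply, e2mk]
    have hsx : s (p x) = (LinearEquiv.ofInjective f hinj).symm (u' x) := by
      rw [hs]
      simp only [LinearMap.coe_comp, Function.comp_apply, LinearEquiv.coe_coe, e2s,
        Submodule.liftQ_apply]
    show toAut w s x = h x
    rw [toAut_apply, hsx]
    have : f ((LinearEquiv.ofInjective f hinj).symm (u' x)) = (u' x : G) :=
      LinearEquiv.ofInjective_symm_apply (f := (f, p).1) (h := hinj) (u' x)
    show x + (f, p).1 ((LinearEquiv.ofInjective f hinj).symm (u' x)) = h x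
    rw [this]
    show x + u x = h x
    simp [hu]

lemma natcard_sigma_const {ι : Type*} [Finite ι] {f : ι → Type*} [∀ i, Finite (f i)] {c : ℕ}
    (h : ∀ i, Nat.card (f i) = c) : Nat.card (Σ i, f i) = Nat.card ι * c := by
  cases nonempty_fintype ι
  letI : ∀ i, Fintype (f i) := fun i => Fintype.ofFinite _
  rw [Nat.card_eq_fintype_card, Nat.card_eq_fintype_card, Fintype.card_sigma]
  have hc : ∀ i, Fintype.card (f i) = c := fun i => by rw [← Nat.card_eq_fintype_card, h]
  simp [hc, Finset.sum_const, Finset.card_univ, mul_comm]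

lemma card_mul_card_orbits [Finite M] [Finite N] [Finite G] :
    Nat.card (G ≃ₗ[R] G) *
      Nat.card (orbitRel.Quotient (G ≃ₗ[R] G) (RPW R M N G)) =
    Nat.card (RPW R M N G) * Nat.card (M →ₗ[R] N) := by
  haveI : Finite (N →ₗ[R] G) := FunLike.finite _
  haveI : Finite (G →ₗ[R] M) := FunLike.finite _
  haveI : Finite (M →ₗ[R] N) := FunLike.finite _
  haveI : Finite (G ≃ₗ[R] G) := FunLike.finite _
  haveI : Finite (RPW R M N G) := Subtype.finite
  have horb : ∀ w : RPW R M N G,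
      Nat.card (orbit (G ≃ₗ[R] G) w × (M →ₗ[R] N)) = Nat.card (G ≃ₗ[R] G) := by
    intro w
    rw [Nat.card_prod, ← card_stabilizer w,
      Nat.card_congr (orbitEquivQuotientStabilizer (G ≃ₗ[R] G) w)]
    exact (Subgroup.card_eq_card_quotient_mul_card_subgroup _).symm
  have e2 : (RPW R M N G) × (M →ₗ[R] N) ≃
      Σ ω : orbitRel.Quotient (G ≃ₗ[R] G) (RPW R M N G),
        (orbit (G ≃ₗ[R] G) ω.out × (M →ₗ[R] N)) :=
    ((selfEquivSigmaOrbits (G ≃ₗ[R] G) (RPW R M N G)).prodCongr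
      (Equiv.refl _)).trans (Equiv.sigmaProdDistrib _ _)
  have := Nat.card_congr e2
  rw [Nat.card_prod, natcard_sigma_const (fun ω => horb _)] at this
  rw [mul_comm, ← this]

variable (R M N G)

abbrev SubT := {B : Submodule R G // Nonempty (B ≃ₗ[R] N) ∧ Nonempty ((G ⧸ B) ≃ₗ[R] M)}

variable {R M N G}

noncomputable def Phi (w : RPW R M N G) : SubT R M N G :=
  ⟨LinearMap.range w.1.1,
    ⟨(LinearEquiv.ofInjective w.1.1 w.2.1).symm⟩,
    ⟨(Submodule.quotEquivOfEq _ _ w.2.2.2).trans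
      (w.1.2.quotKerEquivOfSurjective w.2.2.1)⟩⟩

noncomputable def fiberEquiv (B : SubT R M N G) :
    {w : RPW R M N G // Phi w = B} ≃ ((N ≃ₗ[R] B.1) × ((G ⧸ B.1) ≃ₗ[R] M)) where
  toFun wh :=
    ((LinearEquiv.ofInjective wh.1.1.1 wh.1.2.1).trans
        (LinearEquiv.ofEq _ _ (congrArg Subtype.val wh.2)),
     (Submodule.quotEquivOfEq B.1 (LinearMap.ker wh.1.1.2)
        ((congrArg Subtype.val wh.2).symm.trans wh.1.2.2.2)).trans
       (wh.1.1.2.quotKerEquivOfSurjective wh.1.2.2.1))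
  invFun eq :=
    ⟨⟨(B.1.subtype ∘ₗ eq.1.toLinearMap, eq.2.toLinearMap ∘ₗ B.1.mkQ),
      by
        rw [LinearMap.coe_comp]
        exact B.1.injective_subtype.comp eq.1.injective,
      by
        rw [LinearMap.coe_comp]
        exact eq.2.surjective.comp B.1.mkQ_surjective,
      by
        ext x
        simp only [LinearMap.mem_range, LinearMap.mem_ker, LinearMap.coe_comp,
          Function.comp_apply, Submodule.coe_subtype]
        constructor
        · rintro ⟨n, rfl⟩
          rw [LinearEquiv.coe_coe, map_eq_zero_iff _ eq.2.injective,
            Submodule.mkQ_apply, Submodule.Quotient.mk_eq_zero]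
          exact (eq.1 n).2
        · intro hx
          rw [LinearEquiv.coe_coe, map_eq_zero_iff _ eq.2.injective,
            Submodule.mkQ_apply, Submodule.Quotient.mk_eq_zero] at hx
          exact ⟨eq.1.symm ⟨x, hx⟩, by simp⟩⟩,
      by
        apply Subtype.ext
        show LinearMap.range _ = B.1
        ext x
        simp only [LinearMap.mem_range, LinearMap.coe_comp, Function.comp_apply,
          Submodule.coe_subtype]
        exact ⟨fun ⟨n, hn⟩ => hn ▸ (eq.1 n).2, fun hx => ⟨eq.1.symm ⟨x, hx⟩, by simp⟩⟩⟩
  left_inv wh := by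
    apply Subtype.ext
    apply Subtype.ext
    apply Prod.ext
    · ext n
      simp
      rfl
    · ext x
      rfl
  right_inv eq := by
    apply Prod.ext
    · apply LinearEquiv.toLinearMap_injective
      ext n
      simp
      rfl
    · apply LinearEquiv.toLinearMap_injective
      ext x
      rfl

lemma card_W [Finite M] [Finite N] [Finite G] :
    Nat.card (RPW R M N G) =
      Nat.card (SubT R M N G) * (Nat.card (N ≃ₗ[R] N) * Nat.card (M ≃ₗ[R] M)) := by
  haveI : Finite (N →ₗ[R] G) := FunLike.finite _
  haveI : Finite (G →ₗ[R] M) := FunLike.finite _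
  haveI : Finite (RPW R M N G) := Subtype.finite
  haveI : Finite (Submodule R G) :=
    Finite.of_injective (fun B => (B : Set G)) SetLike.coe_injective
  have hfib : ∀ B : SubT R M N G, Nat.card {w : RPW R M N G // Phi w = B} =
      Nat.card (N ≃ₗ[R] N) * Nat.card (M ≃ₗ[R] M) := by
    intro B
    rw [Nat.card_congr (fiberEquiv B), Nat.card_prod]
    congr 1
    · obtain ⟨j⟩ := B.2.1
      exact Nat.card_congr ⟨fun e => e.trans j, fun e => e.trans j.symm,
        fun e => by ext n; simp, fun e => by ext n; simp⟩
    · obtain ⟨q0⟩ := B.2.2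
      exact Nat.card_congr ⟨fun e => q0.symm.trans e, fun e => q0.trans e,
        fun e => by ext x; simp, fun e => by ext m; simp⟩
  rw [← Nat.card_congr (Equiv.sigmaFiberEquiv (Phi : RPW R M N G → SubT R M N G)),
    natcard_sigma_const hfib]

end RPW

end Aux



/-- **Riedtmann–Peng formula.** Let `k` be a finite field, `A` a
finite-dimensional `k`-algebra and `M, N, G` finite-dimensional `A`-modules. Let
`W(M,N;G)` be the set of pairs `(f, p)` with `f : N → G` injective, `p : G → M` surjective
and `range f = ker p`, on which `Aut_A(G)` acts by `h · (f, p) = (h∘f, p∘h⁻¹)`. Then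
`|Aut_A(G)| * #orbits = g^G_{M,N} * |Aut_A(M)| * |Aut_A(N)| * |Hom_A(M,N)|`, i.e.
`g^G_{M,N} = |Aut_A(G)| * |Ext_A(M,N)_G| / (|Aut_A(M)| * |Aut_A(N)| * |Hom_A(M,N)|)`,
where `|Ext_A(M,N)_G|` is the number of equivalence classes of short exact sequences
`0 → N → G → M → 0` (two being equivalent iff they differ by an automorphism of `G`). -/
theorem stmt5 (k : Type) [Field k] [Fintype k]
    (A : Type) [Ring A] [Algebra k A] [FiniteDimensional k A]
    (M N G : Type)
    [AddCommGroup M] [Module k M] [Module A M] [IsScalarTower k A M] [FiniteDimensional k M]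
    [AddCommGroup N] [Module k N] [Module A N] [IsScalarTower k A N] [FiniteDimensional k N]
    [AddCommGroup G] [Module k G] [Module A G] [IsScalarTower k A G] [FiniteDimensional k G]
    (g : ℕ)
    (hg : g = Nat.card {B : Submodule A G //
      Nonempty (B ≃ₗ[A] N) ∧ Nonempty ((G ⧸ B) ≃ₗ[A] M)})
    (rel : {fp : (N →ₗ[A] G) × (G →ₗ[A] M) //
        Function.Injective fp.1 ∧ Function.Surjective fp.2 ∧
          LinearMap.range fp.1 = LinearMap.ker fp.2} →
      {fp : (N →ₗ[A] G) × (G →ₗ[A] M) //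
        Function.Injective fp.1 ∧ Function.Surjective fp.2 ∧
          LinearMap.range fp.1 = LinearMap.ker fp.2} → Prop)
    (hrel : ∀ w w', rel w w' ↔ ∃ h : G ≃ₗ[A] G,
      (h.toLinearMap ∘ₗ w.1.1 = w'.1.1) ∧ (w.1.2 ∘ₗ h.symm.toLinearMap = w'.1.2)) :
    Nat.card (G ≃ₗ[A] G) * Nat.card (Quot rel) =
      g * Nat.card (M ≃ₗ[A] M) * Nat.card (N ≃ₗ[A] N) * Nat.card (M →ₗ[A] N) := by
  haveI : Finite M := Module.finite_of_finite k
  haveI : Finite N := Module.finite_of_finite k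
  haveI : Finite G := Module.finite_of_finite k
  have hq : Nat.card (Quot rel) =
      Nat.card (MulAction.orbitRel.Quotient (G ≃ₗ[A] G) (RPW A M N G)) := by
    apply Nat.card_congr
    apply Quot.congrRight
    intro w w'
    rw [hrel w w']
    show _ ↔ MulAction.orbitRel (G ≃ₗ[A] G) (RPW A M N G) w w'
    rw [MulAction.orbitRel_apply, MulAction.mem_orbit_iff]
    constructor
    · rintro ⟨h, h1, h2⟩
      have hsw : h • w = w' := (RPW.smul_eq_iff h w w').2 ⟨h1, h2⟩
      exact ⟨h⁻¹, by rw [← hsw, inv_smul_smul]⟩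
    · rintro ⟨h, hsw⟩
      have : h⁻¹ • w = w' := by rw [← hsw, inv_smul_smul]
      obtain ⟨h1, h2⟩ := (RPW.smul_eq_iff h⁻¹ w w').1 this
      exact ⟨h⁻¹, h1, h2⟩
  rw [hq]
  rw [show (Nat.card {B : Submodule A G //
      Nonempty (B ≃ₗ[A] N) ∧ Nonempty ((G ⧸ B) ≃ₗ[A] M)}) =
    Nat.card (RPW.SubT A M N G) from rfl] at hg
  rw [RPW.card_mul_card_orbits, RPW.card_W, hg]
  ring
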